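/- Let ψ be three times differentiable with ψ' > 0, a > 0, and w(φ) = sqrt(ψ''² + ψ'²(1+ψ')²) > 0. The oriented curvature of the driven-gear centrode Ξ_P(φ) = −(a/(1+ψ'))·e^{iψ(φ)} is κ̃(φ) = (1+ψ'(φ))³·[ψ'(φ)(ψ'''(φ) + ψ'(φ)² + ψ'(φ)³) − ψ''(φ)²] / (a·w(φ)³). -/

import Mathlib

set_option maxHeartbeats 1000000

theorem curvature_centrode_driven
    (ψ ψ' ψ'' ψ''' : ℝ → ℝ) (a : ℝ) (ha : 0 < a)
    (hd1 : ∀ t, HasDerivAt ψ (ψ' t) t)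
    (hd2 : ∀ t, HasDerivAt ψ' (ψ'' t) t)
    (hd3 : ∀ t, HasDerivAt ψ'' (ψ''' t) t)
    (hpos : ∀ t, 0 < ψ' t)
    (w : ℝ → ℝ)
    (hw : ∀ t, w t = Real.sqrt ((ψ'' t) ^ 2 + (ψ' t) ^ 2 * (1 + ψ' t) ^ 2))
    (hwpos : ∀ t, 0 < w t)
    (Ξ_P : ℝ → ℂ)
    (hΞ : ∀ t, Ξ_P t =
      -((a / (1 + ψ' t) : ℝ) : ℂ) * Complex.exp ((ψ t : ℂ) * Complex.I))
    (T : ℝ → ℂ)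
    (hT : ∀ t, T t = deriv Ξ_P t / (‖deriv Ξ_P t‖ : ℂ))
    (κ : ℝ → ℝ)
    (hκ : ∀ t, deriv T t =
      ((‖deriv Ξ_P t‖ : ℝ) : ℂ) * (κ t : ℂ) * Complex.I * T t)
    (φ : ℝ) :
    κ φ = (1 + ψ' φ) ^ 3 *
        (ψ' φ * (ψ''' φ + (ψ' φ) ^ 2 + (ψ' φ) ^ 3) - (ψ'' φ) ^ 2) / (a * (w φ) ^ 3) := by
  have h1p : ∀ t, (0:ℝ) < 1 + ψ' t := fun t => by linarith [hpos t]
  have h1p0 : ∀ t, (1 + ψ' t) ≠ 0 := fun t => ne_of_gt (h1p t)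
  have ha0 : a ≠ 0 := ne_of_gt ha
  have hw0 : ∀ t, w t ≠ 0 := fun t => ne_of_gt (hwpos t)
  set E : ℝ → ℂ := fun t => Complex.exp ((ψ t : ℂ) * Complex.I) with hEdef
  have hE : ∀ t, HasDerivAt E ((ψ' t : ℂ) * Complex.I * E t) t := by
    intro t
    have h1 : HasDerivAt (fun s => (ψ s : ℂ) * Complex.I) ((ψ' t : ℂ) * Complex.I) t :=
      ((hd1 t).ofReal_comp).mul_const _
    simpa [hEdef, mul_comm] using h1.cexp
  have hE0 : ∀ t, E t ≠ 0 := fun t => Complex.exp_ne_zero _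
  -- derivative of Ξ_P
  have hDΞ : ∀ t, HasDerivAt Ξ_P
      (((a * ψ'' t / (1 + ψ' t)^2 : ℝ) : ℂ) * E t
        - ((a * ψ' t / (1 + ψ' t) : ℝ) : ℂ) * Complex.I * E t) t := by
    intro t
    have hc : HasDerivAt (fun s => a / (1 + ψ' s))
        ((0 * (1 + ψ' t) - a * ψ'' t) / (1 + ψ' t)^2) t :=
      (hasDerivAt_const t a).div ((hd2 t).const_add 1) (h1p0 t)
    have h2 : HasDerivAt (fun s => -(((a / (1 + ψ' s) : ℝ) : ℂ) * E s))
        (-( (((0 * (1 + ψ' t) - a * ψ'' t) / (1 + ψ' t)^2 : ℝ) : ℂ) * E t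
          + ((a / (1 + ψ' t) : ℝ) : ℂ) * ((ψ' t : ℂ) * Complex.I * E t))) t :=
      ((hc.ofReal_comp).mul (hE t)).neg
    have h3 : HasDerivAt Ξ_P
        (-( (((0 * (1 + ψ' t) - a * ψ'' t) / (1 + ψ' t)^2 : ℝ) : ℂ) * E t
          + ((a / (1 + ψ' t) : ℝ) : ℂ) * ((ψ' t : ℂ) * Complex.I * E t))) t := by
      refine HasDerivAt.congr_of_eventuallyEq h2 ?_
      exact Filter.Eventually.of_forall fun s => by rw [hΞ s, hEdef]; ring
    convert h3 using 1
    push_cast [h1p0 t]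
    field_simp
    ring
  -- modulus of the derivative
  have habs : ∀ t, ‖deriv Ξ_P t‖ = a * w t / (1 + ψ' t)^2 := by
    intro t
    rw [(hDΞ t).deriv]
    have hsplit : ((a * ψ'' t / (1 + ψ' t)^2 : ℝ) : ℂ) * E t
        - ((a * ψ' t / (1 + ψ' t) : ℝ) : ℂ) * Complex.I * E t
        = (((a * ψ'' t / (1 + ψ' t)^2 : ℝ) : ℂ)
          + ((-(a * ψ' t / (1 + ψ' t)) : ℝ) : ℂ) * Complex.I) * E t := by
      push_cast; ring
    rw [hsplit, norm_mul, Complex.norm_add_mul_I, hEdef, Complex.norm_exp_ofReal_mul_I, mul_one]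
    rw [hw t]
    rw [show (a * ψ'' t / (1 + ψ' t)^2)^2 + (-(a * ψ' t / (1 + ψ' t)))^2
        = (a / (1 + ψ' t)^2)^2 * ((ψ'' t)^2 + (ψ' t)^2 * (1 + ψ' t)^2) from by
      field_simp [h1p0 t]]
    rw [Real.sqrt_mul (sq_nonneg _), Real.sqrt_sq (by positivity)]
    ring
  -- T as explicit function
  set N : ℝ → ℂ := fun t => ((ψ'' t : ℝ) : ℂ) - ((ψ' t * (1 + ψ' t) : ℝ) : ℂ) * Complex.I
    with hNdef
  have hTG : ∀ t, T t = N t * E t / ((w t : ℝ) : ℂ) := by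
    intro t
    rw [hT t, habs t, (hDΞ t).deriv, hNdef]
    have hwC : ((w t : ℝ) : ℂ) ≠ 0 := Complex.ofReal_ne_zero.mpr (hw0 t)
    have h1pC : ((1 + ψ' t : ℝ) : ℂ) ≠ 0 := Complex.ofReal_ne_zero.mpr (h1p0 t)
    have haC : ((a : ℝ) : ℂ) ≠ 0 := Complex.ofReal_ne_zero.mpr ha0
    have h1pC2 : (1:ℂ) + ((ψ' t : ℝ) : ℂ) ≠ 0 := by
      exact_mod_cast Complex.ofReal_ne_zero.mpr (h1p0 t)
    push_cast
    field_simp [h1pC2, hw0 t, ha0]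
  -- derivative of w
  set p := ψ' φ with hp
  set q := ψ'' φ with hq
  set r := ψ''' φ with hr
  have hu : HasDerivAt (fun t => (ψ'' t)^2 + (ψ' t)^2 * (1 + ψ' t)^2)
      (2 * q * r + (2 * p * q * (1 + p)^2 + (p)^2 * (2 * (1 + p) * q))) φ := by
    have h1 := (hd3 φ).fun_pow 2
    have h2 := ((hd2 φ).fun_pow 2).fun_mul (((hd2 φ).const_add 1).fun_pow 2)
    refine (h1.fun_add h2).congr_deriv ?_
    push_cast
    ring
  have hwd : HasDerivAt w
      ((2 * q * r + (2 * p * q * (1 + p)^2 + (p)^2 * (2 * (1 + p) * q))) / (2 * w φ)) φ := by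
    have hx : (ψ'' φ)^2 + (ψ' φ)^2 * (1 + ψ' φ)^2 ≠ 0 := by
      have := hwpos φ
      rw [hw φ] at this
      intro h
      rw [h] at this
      simp [Real.sqrt_zero] at this
    have := hu.sqrt hx
    refine HasDerivAt.congr_of_eventuallyEq ?_ (Filter.Eventually.of_forall fun s => hw s)
    rw [← hw φ] at this
    exact this
  set W' : ℝ := (2 * q * r + (2 * p * q * (1 + p)^2 + (p)^2 * (2 * (1 + p) * q))) / (2 * w φ)
    with hW'def
  -- derivative of N and of T
  have hN : HasDerivAt N (((r : ℝ) : ℂ) - ((ψ'' φ * (1 + p) + p * ψ'' φ : ℝ) : ℂ) * Complex.I)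
      φ := by
    have h1 := (hd3 φ).ofReal_comp
    have h2 := (((hd2 φ).mul ((hd2 φ).const_add 1)).ofReal_comp).mul_const Complex.I
    exact h1.sub h2
  have hwCφ : ((w φ : ℝ) : ℂ) ≠ 0 := Complex.ofReal_ne_zero.mpr (hw0 φ)
  set Tder : ℂ := ((((r : ℝ) : ℂ) - ((ψ'' φ * (1 + p) + p * ψ'' φ : ℝ) : ℂ) * Complex.I) * E φ
          + N φ * (((p : ℝ) : ℂ) * Complex.I * E φ)) * ((w φ : ℝ) : ℂ)
        - N φ * E φ * ((W' : ℝ) : ℂ) with hTderdef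
  have hG : HasDerivAt (fun t => N t * E t / ((w t : ℝ) : ℂ))
      (Tder / ((w φ : ℝ) : ℂ)^2) φ :=
    (hN.mul (hE φ)).div (hwd.ofReal_comp) hwCφ
  have hTd : HasDerivAt T (Tder / ((w φ : ℝ) : ℂ)^2) φ :=
    HasDerivAt.congr_of_eventuallyEq hG (Filter.Eventually.of_forall fun s => hTG s)
  -- key relations
  have hWW' : w φ * W' = q * r + p * q * (1 + p) * (1 + 2 * p) := by
    rw [hW'def]
    field_simp [hw0 φ]
    ring
  have hWsq : (w φ)^2 = q^2 + p^2 * (1 + p)^2 := by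
    rw [hw φ, Real.sq_sqrt (by positivity)]
  -- the target curvature value
  set K : ℝ := (1 + p) ^ 3 * (p * (r + p ^ 2 + p ^ 3) - q ^ 2) / (a * (w φ) ^ 3) with hKdef
  -- main algebraic identity
  set W : ℂ := ((w φ : ℝ) : ℂ) with hWdef
  set N' : ℂ := ((r : ℝ) : ℂ) - ((ψ'' φ * (1 + p) + p * ψ'' φ : ℝ) : ℂ) * Complex.I with hN'def
  have hWW'C : W * ((W' : ℝ) : ℂ)
      = ((q * r + p * q * (1 + p) * (1 + 2 * p) : ℝ) : ℂ) := by
    rw [hWdef, ← Complex.ofReal_mul, hWW']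
  have hWsqC : W^2 = (((q^2 + p^2 * (1 + p)^2 : ℝ)) : ℂ) := by
    rw [hWdef, ← Complex.ofReal_pow, hWsq]
  set M : ℂ := (N' + Complex.I * ((p : ℝ) : ℂ) * N φ) * W^2 - N φ * (W * ((W' : ℝ) : ℂ))
    with hMdef
  have hA : Tder / W^2 = M * E φ / W^3 := by
    rw [hMdef, hTderdef, hN'def]
    field_simp [hwCφ]
  have hM : M = (((1 + p) * (p * (r + p^2 + p^3) - q^2) : ℝ) : ℂ) * Complex.I * N φ := by
    rw [hMdef, hWW'C, hWsqC, hNdef, hN'def]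
    push_cast
    linear_combination (((p:ℝ):ℂ)^2 * (1 + ((p:ℝ):ℂ))^2 * ((r:ℝ):ℂ)
      - ((p:ℝ):ℂ) * (1 + ((p:ℝ):ℂ)) * (1 + 2*((p:ℝ):ℂ)) * ((q:ℝ):ℂ)^2) * Complex.I_sq
  have haC : ((a : ℝ) : ℂ) ≠ 0 := Complex.ofReal_ne_zero.mpr ha0
  have h1pC : ((1 + p : ℝ) : ℂ) ≠ 0 := Complex.ofReal_ne_zero.mpr (h1p0 φ)
  have hreal : (a * w φ / (1 + ψ' φ)^2) * K * (w φ)^2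
      = (1 + p) * (p * (r + p^2 + p^3) - q^2) := by
    rw [hKdef]
    field_simp [ha0, hw0 φ, h1p0 φ]
    ring
  have hB : ((a * w φ / (1 + ψ' φ)^2 : ℝ) : ℂ) * ((K : ℝ) : ℂ) * Complex.I
      * (N φ * E φ / W) = M * E φ / W^3 := by
    have h1pC2 : (1:ℂ) + ((ψ' φ : ℝ) : ℂ) ≠ 0 := by
      exact_mod_cast Complex.ofReal_ne_zero.mpr (h1p0 φ)
    rw [hM, hKdef]
    push_cast
    rw [hWdef]
    field_simp [haC, h1pC2, hwCφ]
    ring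
  have hmain : Tder / W^2
      = ((a * w φ / (1 + ψ' φ)^2 : ℝ) : ℂ) * ((K : ℝ) : ℂ) * Complex.I
        * (N φ * E φ / W) := hA.trans hB.symm
  -- combine with the defining equation of κ
  have heq : Tder / W^2
      = ((a * w φ / (1 + ψ' φ)^2 : ℝ) : ℂ) * ((κ φ : ℝ) : ℂ) * Complex.I
        * (N φ * E φ / W) := by
    have h := hκ φ
    rw [hTd.deriv, habs φ, hTG φ] at h
    exact h
  have hN0 : N φ ≠ 0 := by
    intro h0
    have him : (N φ).im = -(ψ' φ * (1 + ψ' φ)) := by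
      simp [hNdef]
    rw [h0] at him
    simp at him
    rcases him with h | h
    · exact (hpos φ).ne' h
    · exact (h1p φ).ne' h
  have hfac : (((κ φ : ℝ) : ℂ) - ((K : ℝ) : ℂ))
      * (((a * w φ / (1 + ψ' φ)^2 : ℝ) : ℂ) * Complex.I * (N φ * E φ / W)) = 0 := by
    linear_combination hmain - heq
  have hcoef : ((a * w φ / (1 + ψ' φ)^2 : ℝ) : ℂ) * Complex.I * (N φ * E φ / W) ≠ 0 := by
    apply mul_ne_zero
    apply mul_ne_zero
    · exact Complex.ofReal_ne_zero.mpr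
        (div_ne_zero (mul_ne_zero ha0 (hw0 φ)) (pow_ne_zero 2 (h1p0 φ)))
    · exact Complex.I_ne_zero
    · exact div_ne_zero (mul_ne_zero hN0 (hE0 φ)) hwCφ
  have hκK : ((κ φ : ℝ) : ℂ) = ((K : ℝ) : ℂ) :=
    sub_eq_zero.mp ((mul_eq_zero.mp hfac).resolve_right hcoef)
  have : κ φ = K := Complex.ofReal_inj.mp hκK
  rw [this, hKdef]
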